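/- Let (X, μ) be a measure space, let N be a positive integer, and let φ₁,…,φ_N, ψ₁,…,ψ_N : X → ℝ be measurable functions such that φ_j·ψ_k is μ-integrable for all j,k and such that the function (x₁,…,x_N) ↦ det(φ_j(x_k))_{1≤j,k≤N} · det(ψ_j(x_k))_{1≤j,k≤N} is integrable with respect to the N-fold product measure μ^⊗N. Then ∫_{X^N} det(φ_j(x_k))_{1≤j,k≤N} · det(ψ_j(x_k))_{1≤j,k≤N} dμ(x₁)⋯dμ(x_N) = N! · det( ∫_X φ_j(x) ψ_k(x) dμ(x) )_{1≤j,k≤N}. -/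

import Mathlib

open MeasureTheory

/-- The Andréief / de Bruijn integral identity. -/
theorem andreief_identity {X : Type*} [MeasurableSpace X] (μ : Measure X) [SigmaFinite μ]
    (N : ℕ) (hN : 0 < N) (φ ψ : Fin N → X → ℝ)
    (hφ : ∀ j, Measurable (φ j)) (hψ : ∀ j, Measurable (ψ j))
    (hint : ∀ j k, Integrable (fun x => φ j x * ψ k x) μ)
    (hdet : Integrable
      (fun x : Fin N → X =>
        (Matrix.of fun j k : Fin N => φ j (x k)).det *
        (Matrix.of fun j k : Fin N => ψ j (x k)).det)
      (Measure.pi fun _ => μ)) :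
    ∫ x : Fin N → X,
        (Matrix.of fun j k : Fin N => φ j (x k)).det *
        (Matrix.of fun j k : Fin N => ψ j (x k)).det ∂(Measure.pi fun _ => μ)
      = (N.factorial : ℝ) *
        (Matrix.of fun j k : Fin N => ∫ x, φ j x * ψ k x ∂μ).det := by
  classical
  letI : MeasureSpace X := ⟨μ⟩
  have hvol : (volume : Measure X) = μ := rfl
  set A : Matrix (Fin N) (Fin N) ℝ := Matrix.of fun j k => ∫ x, φ j x * ψ k x ∂μ with hA
  -- pointwise expansion of the product of determinants
  have hexp : ∀ x : Fin N → X,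
      (Matrix.of fun j k : Fin N => φ j (x k)).det *
        (Matrix.of fun j k : Fin N => ψ j (x k)).det
      = ∑ σ : Equiv.Perm (Fin N), ∑ τ : Equiv.Perm (Fin N),
          (((Equiv.Perm.sign σ : ℤ) : ℝ) * ((Equiv.Perm.sign τ : ℤ) : ℝ)) *
            ∏ k, (φ (σ k) (x k) * ψ (τ k) (x k)) := by
    intro x
    rw [Matrix.det_apply', Matrix.det_apply', Finset.sum_mul_sum]
    refine Finset.sum_congr rfl fun σ _ => Finset.sum_congr rfl fun τ _ => ?_
    simp only [Matrix.of_apply]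
    rw [Finset.prod_mul_distrib]
    ring
  -- integrability of each term
  have hterm : ∀ σ τ : Equiv.Perm (Fin N),
      Integrable (fun x : Fin N → X =>
        (((Equiv.Perm.sign σ : ℤ) : ℝ) * ((Equiv.Perm.sign τ : ℤ) : ℝ)) *
          ∏ k, (φ (σ k) (x k) * ψ (τ k) (x k))) (Measure.pi fun _ => μ) := by
    intro σ τ
    have : Integrable (fun x : Fin N → X => ∏ k, (φ (σ k) (x k) * ψ (τ k) (x k)))
        (volume : Measure (Fin N → X)) :=
      Integrable.fintype_prod (f := fun k y => φ (σ k) y * ψ (τ k) y)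
        (fun k => hint (σ k) (τ k))
    have hv : (volume : Measure (Fin N → X)) = Measure.pi fun _ => μ := rfl
    rw [← hv]
    exact this.const_mul _
  calc
    ∫ x : Fin N → X,
        (Matrix.of fun j k : Fin N => φ j (x k)).det *
        (Matrix.of fun j k : Fin N => ψ j (x k)).det ∂(Measure.pi fun _ => μ)
      = ∑ σ : Equiv.Perm (Fin N), ∑ τ : Equiv.Perm (Fin N),
          ∫ x : Fin N → X,
            (((Equiv.Perm.sign σ : ℤ) : ℝ) * ((Equiv.Perm.sign τ : ℤ) : ℝ)) *
              ∏ k, (φ (σ k) (x k) * ψ (τ k) (x k)) ∂(Measure.pi fun _ => μ) := by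
        simp_rw [hexp]
        rw [integral_finset_sum _ (fun σ _ => integrable_finset_sum _ (fun τ _ => hterm σ τ))]
        exact Finset.sum_congr rfl fun σ _ =>
          integral_finset_sum _ (fun τ _ => hterm σ τ)
    _ = ∑ σ : Equiv.Perm (Fin N), ∑ τ : Equiv.Perm (Fin N),
          (((Equiv.Perm.sign σ : ℤ) : ℝ) * ((Equiv.Perm.sign τ : ℤ) : ℝ)) *
            ∏ k, A (σ k) (τ k) := by
        refine Finset.sum_congr rfl fun σ _ => Finset.sum_congr rfl fun τ _ => ?_
        rw [integral_const_mul]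
        congr 1
        have hv : (Measure.pi fun _ : Fin N => μ) = (volume : Measure (Fin N → X)) := rfl
        rw [hv]
        refine (integral_fintype_prod_eq_prod (ι := Fin N) (fun k y => φ (σ k) y * ψ (τ k) y)
          (μ := fun _ => μ)).trans ?_
        rfl
    _ = ∑ σ : Equiv.Perm (Fin N), A.det := by
        refine Finset.sum_congr rfl fun σ _ => ?_
        rw [show A.det = A.transpose.det from (Matrix.det_transpose A).symm,
          Matrix.det_apply']
        rw [← Equiv.sum_comp (Equiv.mulRight σ)
          (fun τ => (((Equiv.Perm.sign σ : ℤ) : ℝ) * ((Equiv.Perm.sign τ : ℤ) : ℝ)) *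
            ∏ k, A (σ k) (τ k))]
        refine Finset.sum_congr rfl fun ρ _ => ?_
        simp only [Equiv.coe_mulRight, Equiv.Perm.sign_mul, Equiv.Perm.mul_apply,
          Matrix.transpose_apply]
        have h1 : ∏ k, A (σ k) (ρ (σ k)) = ∏ j, A j (ρ j) :=
          Equiv.prod_comp σ (fun j => A j (ρ j))
        have h2 : ((Equiv.Perm.sign σ : ℤ) : ℝ) *
            (((Equiv.Perm.sign ρ * Equiv.Perm.sign σ : ℤˣ) : ℤ) : ℝ)
            = ((Equiv.Perm.sign ρ : ℤ) : ℝ) := by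
          rcases Int.units_eq_one_or (Equiv.Perm.sign σ) with h | h <;>
            rcases Int.units_eq_one_or (Equiv.Perm.sign ρ) with h' | h' <;>
            simp [h, h']
        rw [h1, h2]
    _ = (N.factorial : ℝ) * A.det := by
        rw [Finset.sum_const, Finset.card_univ, Fintype.card_perm, Fintype.card_fin,
          nsmul_eq_mul]
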